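/- Let n, d be nonnegative integers, let V ⊆ ℚ^(n+d) and W ⊆ ℤ^(n+d) be finite sets, let P = conv(V) + cone(W), and let R ≥ 0 be an upper bound on the ℓ∞-norm of every element of V and of W. Set R' = (n+d+1)·R, let B = [−R', R']^(n+d), and let Q = P ∩ B. Then P = Q + cone(W) and conv(P ∩ (ℤ^n × ℝ^d)) = conv(Q ∩ (ℤ^n × ℝ^d)) + cone(W). -/

import Mathlib

open Pointwise

/-- The conic hull of a set `W`: all finite nonnegative combinations of elements of `W`. -/
def coneHull {M : Type*} [AddCommMonoid M] [Module ℝ M] (W : Set M) : Set M :=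
  {x | ∃ (s : Finset M) (μ : M → ℝ), ↑s ⊆ W ∧ (∀ w ∈ s, 0 ≤ μ w) ∧ x = ∑ w ∈ s, μ w • w}

section coneHullLemmas
variable {M : Type*} [AddCommMonoid M] [Module ℝ M] {W : Set M}

lemma zero_mem_coneHull : (0 : M) ∈ coneHull W :=
  ⟨∅, 0, by simp, by simp, by simp⟩

lemma smul_mem_coneHull {x : M} {t : ℝ} (ht : 0 ≤ t) (hx : x ∈ coneHull W) :
    t • x ∈ coneHull W := by
  obtain ⟨s, μ, hs, hμ, rfl⟩ := hx
  exact ⟨s, fun w => t * μ w, hs, fun w hw => mul_nonneg ht (hμ w hw), by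
    rw [Finset.smul_sum]; exact Finset.sum_congr rfl fun w _ => by
      dsimp only; rw [smul_smul]⟩

lemma smul_single_mem_coneHull [DecidableEq M] {w : M} {t : ℝ} (ht : 0 ≤ t) (hw : w ∈ W) :
    t • w ∈ coneHull W := by
  refine ⟨{w}, fun _ => t, by simpa, fun _ _ => ht, by simp⟩

lemma add_mem_coneHull [DecidableEq M] {x y : M} (hx : x ∈ coneHull W) (hy : y ∈ coneHull W) :
    x + y ∈ coneHull W := by
  obtain ⟨s, μ, hs, hμ, rfl⟩ := hx
  obtain ⟨t, ν, ht, hν, rfl⟩ := hy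
  refine ⟨s ∪ t, fun w => (if w ∈ s then μ w else 0) + (if w ∈ t then ν w else 0),
    by simp [Finset.coe_union, Set.union_subset hs ht], fun w _ => by
      dsimp only
      split_ifs with ha hb hb
      · exact add_nonneg (hμ w ha) (hν w hb)
      · simpa using hμ w ha
      · simpa using hν w hb
      · simp, ?_⟩
  have e1 : ∀ (u : Finset M) (ρ : M → ℝ), u ⊆ s ∪ t →
      ∑ w ∈ s ∪ t, (if w ∈ u then ρ w else 0) • w = ∑ w ∈ u, ρ w • w := by
    intro u ρ hu
    rw [← Finset.sum_subset hu (fun w _ hw => by simp [hw])]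
    exact Finset.sum_congr rfl fun w hw => by simp [hw]
  rw [← e1 s μ Finset.subset_union_left, ← e1 t ν Finset.subset_union_right,
    ← Finset.sum_add_distrib]
  exact Finset.sum_congr rfl fun w _ => (add_smul _ _ w).symm

lemma convex_coneHull [DecidableEq M] : Convex ℝ (coneHull W) := by
  intro x hx y hy a b ha hb _
  exact add_mem_coneHull (smul_mem_coneHull ha hx) (smul_mem_coneHull hb hy)

end coneHullLemmas

lemma cone_caratheodory {E : Type*} [AddCommGroup E] [Module ℝ E] [DecidableEq E] :
    ∀ (N : ℕ) (s : Finset E), s.card ≤ N → ∀ (μ : E → ℝ), (∀ w ∈ s, 0 ≤ μ w) →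
    ∃ (s' : Finset E) (ν : E → ℝ), s' ⊆ s ∧ (∀ w ∈ s', 0 ≤ ν w) ∧
      (∑ w ∈ s', ν w • w = ∑ w ∈ s, μ w • w) ∧
      LinearIndependent ℝ (fun x : ↥s' => (x : E)) := by
  intro N
  induction N with
  | zero =>
    intro s hs μ hμ
    have h0 : s = ∅ := Finset.card_eq_zero.mp (Nat.le_zero.mp hs)
    subst h0
    refine ⟨∅, μ, subset_rfl, by simp, rfl, ?_⟩
    haveI : IsEmpty (↥((∅ : Finset E) : Set E)) := by simp
    exact linearIndependent_empty_type
  | succ N ih =>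
    intro s hs μ hμ
    by_cases hli : LinearIndependent ℝ (fun x : ↥s => (x : E))
    · exact ⟨s, μ, subset_rfl, hμ, rfl, hli⟩
    · obtain ⟨g, hg0, i₀, hi₀⟩ := Fintype.not_linearIndependent_iff.mp
        (by simpa using hli)
      have key : ∀ g : ↥s → ℝ, (∑ i, g i • (i : E)) = 0 → (∃ i, 0 < g i) →
          ∃ (s' : Finset E) (ν : E → ℝ), s' ⊆ s ∧ (∀ w ∈ s', 0 ≤ ν w) ∧
            (∑ w ∈ s', ν w • w = ∑ w ∈ s, μ w • w) ∧
            LinearIndependent ℝ (fun x : ↥s' => (x : E)) := by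
        clear hg0 hi₀ g
        intro g hg0 hpos
        set T : Finset ↥s := Finset.univ.filter (fun i => 0 < g i) with hT
        have hTne : T.Nonempty := by
          obtain ⟨i, hi⟩ := hpos
          exact ⟨i, by simp [hT, hi]⟩
        obtain ⟨i₁, hi₁T, hmin⟩ := Finset.exists_min_image T (fun i => μ (i : E) / g i) hTne
        have hgi₁ : 0 < g i₁ := by simpa [hT] using hi₁T
        set t : ℝ := μ (i₁ : E) / g i₁ with htdef
        have ht : 0 ≤ t := div_nonneg (hμ _ i₁.2) hgi₁.le
        set gext : E → ℝ := fun w => if h : w ∈ s then g ⟨w, h⟩ else 0 with hgext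
        set ν : E → ℝ := fun w => μ w - t * gext w with hν
        have hνnn : ∀ w ∈ s, 0 ≤ ν w := by
          intro w hw
          have hge : gext w = g ⟨w, hw⟩ := by simp [hgext, hw]
          rcases le_or_gt (g ⟨w, hw⟩) 0 with h | h
          · have h1 : t * gext w ≤ 0 := by
              rw [hge]; exact mul_nonpos_of_nonneg_of_nonpos ht h
            have := hμ w hw
            simp only [hν]; linarith
          · have h2 : t ≤ μ w / g ⟨w, hw⟩ := hmin ⟨w, hw⟩ (by simp [hT, h])
            have h3 : t * g ⟨w, hw⟩ ≤ μ w := by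
              rw [← le_div_iff₀ h]; exact h2
            simp only [hν, hge]; linarith
        have hνi₁ : ν (i₁ : E) = 0 := by
          have hge : gext (i₁ : E) = g i₁ := by simp [hgext, i₁.2]
          simp only [hν, hge, htdef]
          field_simp
          ring
        have hz : ∑ w ∈ s, gext w • w = 0 := by
          rw [← hg0, Finset.univ_eq_attach,
            ← Finset.sum_attach s (fun w => gext w • w)]
          exact Finset.sum_congr rfl fun i _ => by
            simp only [hgext]; rw [dif_pos i.2]
        have hsum : ∑ w ∈ s, ν w • w = ∑ w ∈ s, μ w • w := by
          have hterm : ∀ w ∈ s, ν w • w = μ w • w - t • (gext w • w) := by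
            intro w _
            simp only [hν, sub_smul, mul_smul]
          rw [Finset.sum_congr rfl hterm, Finset.sum_sub_distrib, ← Finset.smul_sum, hz,
            smul_zero, sub_zero]
        have hcard : (s.erase (i₁ : E)).card ≤ N := by
          have := Finset.card_erase_of_mem i₁.2
          have h2 := Finset.card_pos.mpr ⟨(i₁ : E), i₁.2⟩
          omega
        obtain ⟨s', ν', hsub, hnn, hs'sum, hli'⟩ :=
          ih (s.erase (i₁ : E)) hcard ν (fun w hw => hνnn w (Finset.mem_of_mem_erase hw))
        refine ⟨s', ν', hsub.trans (Finset.erase_subset _ _), hnn, ?_, hli'⟩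
        rw [hs'sum, Finset.sum_erase s (by rw [hνi₁, zero_smul]), hsum]
      by_cases hpos : ∃ i, 0 < g i
      · exact key g hg0 hpos
      · refine key (-g) (by simpa using hg0) ⟨i₀, ?_⟩
        have hle : g i₀ ≤ 0 := not_lt.mp fun h => hpos ⟨i₀, h⟩
        simp only [Pi.neg_apply]
        cases lt_or_eq_of_le hle with
        | inl h => linarith
        | inr h => exact absurd h hi₀

theorem reduction_to_bounded_polyhedron (n d : ℕ)
    (V : Finset ((Fin n → ℚ) × (Fin d → ℚ)))
    (W : Finset ((Fin n → ℤ) × (Fin d → ℤ)))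
    (VR WR : Set ((Fin n → ℝ) × (Fin d → ℝ)))
    (hVR : VR = (fun (v : (Fin n → ℚ) × (Fin d → ℚ)) =>
      ((fun i => ((v.1 i : ℝ))), fun j => ((v.2 j : ℝ)))) '' ↑V)
    (hWR : WR = (fun (w : (Fin n → ℤ) × (Fin d → ℤ)) =>
      ((fun i => ((w.1 i : ℝ))), fun j => ((w.2 j : ℝ)))) '' ↑W)
    (P MI : Set ((Fin n → ℝ) × (Fin d → ℝ)))
    (hP : P = convexHull ℝ VR + coneHull WR)
    (hMI : MI = {p | ∀ i, ∃ z : ℤ, p.1 i = (z : ℝ)})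
    (R : ℝ) (hR : 0 ≤ R)
    (hRV : ∀ v ∈ VR, (∀ i, |v.1 i| ≤ R) ∧ (∀ j, |v.2 j| ≤ R))
    (hRW : ∀ w ∈ WR, (∀ i, |w.1 i| ≤ R) ∧ (∀ j, |w.2 j| ≤ R))
    (R' : ℝ) (hR' : R' = ((n + d + 1 : ℕ) : ℝ) * R)
    (B Q : Set ((Fin n → ℝ) × (Fin d → ℝ)))
    (hB : B = {p | (∀ i, -R' ≤ p.1 i ∧ p.1 i ≤ R') ∧ (∀ j, -R' ≤ p.2 j ∧ p.2 j ≤ R')})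
    (hQ : Q = P ∩ B) :
    P = Q + coneHull WR ∧
    convexHull ℝ (P ∩ MI) = convexHull ℝ (Q ∩ MI) + coneHull WR := by
  classical
  -- norm ↔ coordinate bounds
  have normle : ∀ (p : (Fin n → ℝ) × (Fin d → ℝ)) (r : ℝ), 0 ≤ r →
      (∀ i, |p.1 i| ≤ r) → (∀ j, |p.2 j| ≤ r) → ‖p‖ ≤ r := by
    intro p r hr h1 h2
    rw [Prod.norm_def]
    refine max_le ?_ ?_ <;> rw [pi_norm_le_iff_of_nonneg hr]
    · intro i; simpa [Real.norm_eq_abs] using h1 i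
    · intro j; simpa [Real.norm_eq_abs] using h2 j
  have coordle : ∀ (p : (Fin n → ℝ) × (Fin d → ℝ)) (r : ℝ), ‖p‖ ≤ r →
      (∀ i, |p.1 i| ≤ r) ∧ (∀ j, |p.2 j| ≤ r) := by
    intro p r h
    constructor
    · intro i
      calc |p.1 i| = ‖p.1 i‖ := (Real.norm_eq_abs _).symm
        _ ≤ ‖p.1‖ := norm_le_pi_norm p.1 i
        _ ≤ ‖p‖ := norm_fst_le p
        _ ≤ r := h
    · intro j
      calc |p.2 j| = ‖p.2 j‖ := (Real.norm_eq_abs _).symm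
        _ ≤ ‖p.2‖ := norm_le_pi_norm p.2 j
        _ ≤ ‖p‖ := norm_snd_le p
        _ ≤ r := h
  have hVnorm : ∀ v ∈ VR, ‖v‖ ≤ R := fun v hv => normle v R hR (hRV v hv).1 (hRV v hv).2
  have hWnorm : ∀ w ∈ WR, ‖w‖ ≤ R := fun w hw => normle w R hR (hRW w hw).1 (hRW w hw).2
  have hconvnorm : ∀ v ∈ convexHull ℝ VR, ‖v‖ ≤ R := by
    intro v hv
    have hsub : convexHull ℝ VR ⊆ Metric.closedBall 0 R :=
      convexHull_min (fun x hx => mem_closedBall_zero_iff.mpr (hVnorm x hx))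
        (convex_closedBall 0 R)
    exact mem_closedBall_zero_iff.mp (hsub hv)
  have hRR' : R ≤ R' := by
    rw [hR']
    have h1 : (1 : ℝ) ≤ ((n + d + 1 : ℕ) : ℝ) := by push_cast; linarith [Nat.cast_nonneg (α := ℝ) n, Nat.cast_nonneg (α := ℝ) d]
    nlinarith
  have hBmem : ∀ p : (Fin n → ℝ) × (Fin d → ℝ), ‖p‖ ≤ R' → p ∈ B := by
    intro p hp
    rw [hB]
    obtain ⟨h1, h2⟩ := coordle p R' hp
    exact ⟨fun i => abs_le.mp (h1 i), fun j => abs_le.mp (h2 j)⟩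
  have hPadd : ∀ x ∈ P, ∀ c ∈ coneHull WR, x + c ∈ P := by
    intro x hx c hc
    rw [hP] at hx ⊢
    obtain ⟨v, hv, c0, hc0, rfl⟩ := hx
    exact ⟨v, hv, c0 + c, add_mem_coneHull hc0 hc, (add_assoc _ _ _).symm⟩
  -- decomposition of P
  have decomp : ∀ x ∈ P, ∃ q ∈ Q, ∃ c ∈ coneHull WR, q + c = x := by
    intro x hx
    rw [hP] at hx
    obtain ⟨v, hv, c, hc, rfl⟩ := hx
    by_cases hc0 : c = 0
    · subst hc0
      refine ⟨v + 0, ?_, 0, zero_mem_coneHull, by simp⟩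
      rw [hQ]
      constructor
      · rw [hP]; exact ⟨v, hv, 0, zero_mem_coneHull, rfl⟩
      · exact hBmem _ (by simpa using (hconvnorm v hv).trans hRR')
    · have hcpos : 0 < ‖c‖ := norm_pos_iff.mpr hc0
      set L : ℝ := min 1 ((R' - R) / ‖c‖) with hL
      have hL0 : 0 ≤ L := le_min zero_le_one (div_nonneg (by linarith) hcpos.le)
      have hL1 : L ≤ 1 := min_le_left _ _
      refine ⟨v + L • c, ?_, (1 - L) • c, smul_mem_coneHull (by linarith) hc, ?_⟩
      · rw [hQ]
        constructor
        · rw [hP]; exact ⟨v, hv, L • c, smul_mem_coneHull hL0 hc, rfl⟩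
        · refine hBmem _ ?_
          have h1 : ‖v + L • c‖ ≤ ‖v‖ + L * ‖c‖ := by
            calc ‖v + L • c‖ ≤ ‖v‖ + ‖L • c‖ := norm_add_le _ _
              _ = ‖v‖ + L * ‖c‖ := by rw [norm_smul, Real.norm_eq_abs, abs_of_nonneg hL0]
          have h2 : L * ‖c‖ ≤ R' - R := by
            calc L * ‖c‖ ≤ ((R' - R) / ‖c‖) * ‖c‖ :=
                mul_le_mul_of_nonneg_right (min_le_right _ _) hcpos.le
              _ = R' - R := div_mul_cancel₀ _ hcpos.ne'
          linarith [hconvnorm v hv]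
      · rw [add_assoc, ← add_smul]
        simp
  have part1 : P = Q + coneHull WR := by
    apply Set.Subset.antisymm
    · intro x hx
      obtain ⟨q, hq, c, hc, he⟩ := decomp x hx
      exact ⟨q, hq, c, hc, he⟩
    · rintro x ⟨q, hq, c, hc, rfl⟩
      have hqP : q ∈ P := by rw [hQ] at hq; exact hq.1
      exact hPadd q hqP c hc
  -- integrality of generators
  have hWint : ∀ w ∈ WR, ∀ i, ∃ z : ℤ, w.1 i = (z : ℝ) := by
    rw [hWR]
    rintro w ⟨w₀, _, rfl⟩ i
    exact ⟨w₀.1 i, rfl⟩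
  have hxMI' : ∀ p ∈ MI, ∀ i, ∃ z : ℤ, p.1 i = (z : ℝ) := by
    intro p hp
    rw [hMI] at hp
    exact hp
  -- L0 : integer point plus ray stays in hull
  have L0 : ∀ y ∈ P ∩ MI, ∀ w ∈ WR, ∀ t : ℝ, 0 ≤ t →
      y + t • w ∈ convexHull ℝ (P ∩ MI) := by
    intro y hy w hw t ht
    set m : ℕ := ⌈t⌉₊ with hm
    have htm : t ≤ (m : ℝ) := Nat.le_ceil t
    by_cases hm0 : m = 0
    · have ht0 : t = 0 := le_antisymm (by rw [hm0] at htm; exact_mod_cast htm) ht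
      rw [ht0]
      simpa using subset_convexHull ℝ _ hy
    · have hmpos : 0 < (m : ℝ) := by exact_mod_cast Nat.pos_of_ne_zero hm0
      have hy2 : y + (m : ℝ) • w ∈ P ∩ MI := by
        constructor
        · exact hPadd y hy.1 _ (smul_single_mem_coneHull hmpos.le hw)
        · rw [hMI]
          intro i
          obtain ⟨z, hz⟩ := hxMI' y hy.2 i
          obtain ⟨zw, hzw⟩ := hWint w hw i
          refine ⟨z + m * zw, ?_⟩
          have : (y + (m : ℝ) • w).1 i = y.1 i + (m : ℝ) * w.1 i := rfl
          rw [this, hz, hzw]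
          push_cast
          ring
      have he : (t / m) * (m : ℝ) = t := div_mul_cancel₀ t hmpos.ne'
      have hcomb : y + t • w = (1 - t / m) • y + (t / m) • (y + (m : ℝ) • w) := by
        rw [smul_add, smul_smul, he, ← add_assoc, ← add_smul]
        simp
      rw [hcomb]
      refine (convex_convexHull ℝ (P ∩ MI)) (subset_convexHull ℝ _ hy)
        (subset_convexHull ℝ _ hy2) ?_ ?_ (by ring)
      · have : t / m ≤ 1 := (div_le_one hmpos).mpr htm
        linarith
      · positivity
  -- single-generator step on the hull
  have step : ∀ w ∈ WR, ∀ t : ℝ, 0 ≤ t → ∀ x ∈ convexHull ℝ (P ∩ MI),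
      x + t • w ∈ convexHull ℝ (P ∩ MI) := by
    intro w hw t ht x hx
    have himg : (P ∩ MI) + {t • w} ⊆ convexHull ℝ (P ∩ MI) := by
      rintro _ ⟨y, hy, z, hz, rfl⟩
      rw [Set.mem_singleton_iff] at hz
      subst hz
      exact L0 y hy w hw t ht
    have hmem : x + t • w ∈ convexHull ℝ (P ∩ MI) + convexHull ℝ {t • w} := by
      rw [convexHull_singleton]
      exact ⟨x, hx, t • w, rfl, rfl⟩
    rw [← convexHull_add] at hmem
    exact convexHull_min himg (convex_convexHull ℝ _) hmem
  -- hull absorbs the cone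
  have L1 : ∀ (s : Finset ((Fin n → ℝ) × (Fin d → ℝ))), ↑s ⊆ WR →
      ∀ μ : ((Fin n → ℝ) × (Fin d → ℝ)) → ℝ, (∀ w ∈ s, 0 ≤ μ w) →
      ∀ x ∈ convexHull ℝ (P ∩ MI), x + ∑ w ∈ s, μ w • w ∈ convexHull ℝ (P ∩ MI) := by
    intro s
    induction s using Finset.induction_on with
    | empty => intro _ μ _ x hx; simpa using hx
    | @insert a s' ha ih =>
      intro hsW μ hμ x hx
      rw [Finset.sum_insert ha, ← add_assoc]
      have hs'W : ↑s' ⊆ WR :=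
        Set.Subset.trans (Finset.coe_subset.mpr (Finset.subset_insert a s')) hsW
      refine ih hs'W μ (fun w hw => hμ w (Finset.mem_insert_of_mem hw)) _ ?_
      exact step a (hsW (by simp)) (μ a) (hμ a (Finset.mem_insert_self a s')) x hx
  -- core of part 2
  have core : P ∩ MI ⊆ convexHull ℝ (Q ∩ MI) + coneHull WR := by
    rintro x ⟨hxP, hxMI⟩
    rw [hP] at hxP
    obtain ⟨v, hv, c, hc, hxeq⟩ := hxP
    replace hxeq : x = v + c := hxeq.symm
    obtain ⟨s, μ, hsW, hμ, hceq⟩ := hc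
    obtain ⟨s', ν, hsub, hνnn, hsum, hli⟩ := cone_caratheodory s.card s le_rfl μ hμ
    have hs'W : ↑s' ⊆ WR := fun w hw => hsW (hsub hw)
    have hcard : s'.card ≤ n + d := by
      have h1 := hli.fintype_card_le_finrank
      rw [Fintype.card_coe] at h1
      have h2 : Module.finrank ℝ ((Fin n → ℝ) × (Fin d → ℝ)) = n + d := by simp
      omega
    set c1 : (Fin n → ℝ) × (Fin d → ℝ) := ∑ w ∈ s', ((⌊ν w⌋ : ℝ)) • w with hc1def
    set y : (Fin n → ℝ) × (Fin d → ℝ) := v + ∑ w ∈ s', Int.fract (ν w) • w with hydef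
    have hyx : y + c1 = x := by
      rw [hxeq, hceq, ← hsum, hydef, hc1def, add_assoc, ← Finset.sum_add_distrib]
      congr 1
      refine Finset.sum_congr rfl fun w _ => ?_
      rw [← add_smul, Int.fract_add_floor]
    have hc1cone : c1 ∈ coneHull WR := by
      refine ⟨s', fun w => ((⌊ν w⌋ : ℝ)), hs'W, fun w hw => ?_, rfl⟩
      show (0 : ℝ) ≤ ((⌊ν w⌋ : ℤ) : ℝ)
      exact_mod_cast Int.floor_nonneg.mpr (hνnn w hw)
    have hyP : y ∈ P := by
      rw [hP, hydef]
      exact ⟨v, hv, _, ⟨s', fun w => Int.fract (ν w), hs'W,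
        fun w _ => Int.fract_nonneg _, rfl⟩, rfl⟩
    have hc1int : ∀ i, ∃ z : ℤ, c1.1 i = (z : ℝ) := by
      intro i
      have hch : ∀ w ∈ s', ∃ z : ℤ, w.1 i = (z : ℝ) := fun w hw => hWint w (hs'W hw) i
      choose zf hzf using hch
      refine ⟨∑ w ∈ s'.attach, ⌊ν (w : _)⌋ * zf w w.2, ?_⟩
      rw [hc1def]
      have e1 : (∑ w ∈ s', ((⌊ν w⌋ : ℝ)) • w).1 i = ∑ w ∈ s', ((⌊ν w⌋ : ℝ)) * w.1 i := by
        rw [Prod.fst_sum, Finset.sum_apply]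
        rfl
      rw [e1, ← Finset.sum_attach s' (fun w => ((⌊ν w⌋ : ℝ)) * w.1 i)]
      push_cast
      exact Finset.sum_congr rfl fun w _ => by rw [hzf w w.2]
    have hyMI : y ∈ MI := by
      rw [hMI]
      intro i
      obtain ⟨zx, hzx⟩ := hxMI' x hxMI i
      obtain ⟨zc, hzc⟩ := hc1int i
      refine ⟨zx - zc, ?_⟩
      have h1 : y.1 i + c1.1 i = x.1 i := by
        have := congrArg (fun p => p.1 i) hyx
        simpa using this
      rw [hzc, hzx] at h1
      push_cast
      linarith
    have hyB : y ∈ B := by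
      refine hBmem y ?_
      have h1 : ‖∑ w ∈ s', Int.fract (ν w) • w‖ ≤ (s'.card : ℝ) * R := by
        calc ‖∑ w ∈ s', Int.fract (ν w) • w‖ ≤ ∑ w ∈ s', ‖Int.fract (ν w) • w‖ :=
            norm_sum_le _ _
          _ ≤ ∑ w ∈ s', R := by
            refine Finset.sum_le_sum fun w hw => ?_
            rw [norm_smul, Real.norm_eq_abs, abs_of_nonneg (Int.fract_nonneg _)]
            calc Int.fract (ν w) * ‖w‖ ≤ 1 * R :=
                mul_le_mul (Int.fract_lt_one _).le (hWnorm w (hs'W hw)) (norm_nonneg _)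
                  zero_le_one
              _ = R := one_mul R
          _ = (s'.card : ℝ) * R := by rw [Finset.sum_const, nsmul_eq_mul]
      have h2 : ‖y‖ ≤ ‖v‖ + (s'.card : ℝ) * R := by
        rw [hydef]
        calc ‖v + ∑ w ∈ s', Int.fract (ν w) • w‖ ≤
            ‖v‖ + ‖∑ w ∈ s', Int.fract (ν w) • w‖ := norm_add_le _ _
          _ ≤ ‖v‖ + (s'.card : ℝ) * R := by linarith
      have h3 : (s'.card : ℝ) ≤ ((n + d : ℕ) : ℝ) := by exact_mod_cast hcard
      have h4 : (s'.card : ℝ) * R ≤ ((n + d : ℕ) : ℝ) * R :=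
        mul_le_mul_of_nonneg_right h3 hR
      have h5 : ‖v‖ ≤ R := hconvnorm v hv
      rw [hR']
      push_cast
      push_cast at h4
      linarith
    have hyQ : y ∈ Q := by rw [hQ]; exact ⟨hyP, hyB⟩
    exact ⟨y, subset_convexHull ℝ _ ⟨hyQ, hyMI⟩, c1, hc1cone, hyx⟩
  have part2 : convexHull ℝ (P ∩ MI) = convexHull ℝ (Q ∩ MI) + coneHull WR := by
    apply Set.Subset.antisymm
    · exact convexHull_min core ((convex_convexHull ℝ _).add convex_coneHull)
    · rintro x ⟨p, hp, c, hc, rfl⟩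
      have hQP : Q ∩ MI ⊆ P ∩ MI := by
        rw [hQ]
        exact Set.inter_subset_inter_left MI Set.inter_subset_left
      have hp' : p ∈ convexHull ℝ (P ∩ MI) := convexHull_mono hQP hp
      obtain ⟨s, μ, hsW, hμ, rfl⟩ := hc
      exact L1 s hsW μ hμ p hp'
  exact ⟨part1, part2⟩
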